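/- Let Γ be an infinite group generated by a finite symmetric set T, equipped with the word metric d_T(g,h) = min{n : g⁻¹h is a product of n elements of T}. Let Γ ≥ Γ₁ ≥ Γ₂ ≥ ⋯ be a decreasing sequence of finite index normal subgroups with ⋂_n Γ_n = {e}, and let X_n = Γ/Γ_n carry the word metric coming from the image of T. Let X be a bounded geometry metric space whose underlying set is ⊔_n X_n, whose metric restricts to the word metric on each X_n, and which satisfies d(X_n, X \ X_n) → ∞ as n → ∞ (a box space of Γ). If X has ULA, then Γ is amenable in the Block–Weinberger sense: for all R, ε > 0 there exists a finite nonempty subset E ⊆ Γ with |∂_R E| < ε·|E| (boundary taken with respect to the word metric on Γ). -/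

import Mathlib

/-- `N_R(E)`, the `R`-neighbourhood of `E`. -/
def nbhd {X : Type*} [MetricSpace X] (R : ℝ) (E : Set X) : Set X :=
  {y | ∃ e ∈ E, dist y e ≤ R}

/-- `∂_R E = N_R(E) \ E`. -/
def bdry {X : Type*} [MetricSpace X] (R : ℝ) (E : Set X) : Set X :=
  nbhd R E \ E

/-- Bounded geometry. -/
def BoundedGeometry (X : Type*) [MetricSpace X] : Prop :=
  ∀ R : ℝ, 0 < R → ∃ N : ℕ, ∀ x : X,
    {y | dist x y ≤ R}.Finite ∧ {y | dist x y ≤ R}.ncard ≤ N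

/-- A probability measure on `X`, as a function. -/
def IsProbFn {X : Type*} (μ : X → ℝ) : Prop :=
  (∀ x, 0 ≤ μ x) ∧ Summable μ ∧ ∑' x, μ x = 1

/-- `μ(E)`. -/
noncomputable def measOf {X : Type*} (μ : X → ℝ) (E : Set X) : ℝ := ∑' x : E, μ x

/-- Uniform local amenability. -/
def ULA (X : Type*) [MetricSpace X] : Prop :=
  ∀ R : ℝ, 0 < R → ∀ ε : ℝ, 0 < ε → ∃ S : ℝ, 0 < S ∧
    ∀ F : Set X, F.Finite → ∃ E : Set X, E.Finite ∧
      EMetric.diam E ≤ ENNReal.ofReal S ∧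
      ((bdry R E ∩ F).ncard : ℝ) < ε * ((E ∩ F).ncard : ℝ)

/-- Measured uniform local amenability. -/
def ULAmu (X : Type*) [MetricSpace X] : Prop :=
  ∀ R : ℝ, 0 < R → ∀ ε : ℝ, 0 < ε → ∃ S : ℝ, 0 < S ∧
    ∀ μ : X → ℝ, IsProbFn μ → ∃ E : Set X, E.Finite ∧
      EMetric.diam E ≤ ENNReal.ofReal S ∧
      measOf μ (bdry R E) < ε * measOf μ E

/-- Coarse embedding. -/
def CoarseEmbedding {X Y : Type*} [MetricSpace X] [MetricSpace Y] (f : X → Y) : Prop :=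
  ∃ ρm ρp : ℝ → ℝ, Monotone ρm ∧ Monotone ρp ∧
    Filter.Tendsto ρm Filter.atTop Filter.atTop ∧
    ∀ x₁ x₂ : X, ρm (dist x₁ x₂) ≤ dist (f x₁) (f x₂) ∧
      dist (f x₁) (f x₂) ≤ ρp (dist x₁ x₂)

/-- The word length of $g$ with respect to a generating set $T$: the least number of
elements of $T$ whose product is $g$.  (With the word metric $d_T(g,h) =
\mathrm{wlen}_T(g^{-1}h)$.) -/
noncomputable def wlen {Γ : Type*} [Group Γ] (T : Finset Γ) (g : Γ) : ℕ :=
  sInf {n : ℕ | ∃ l : List Γ, (∀ t ∈ l, t ∈ T) ∧ l.prod = g ∧ l.length = n}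

section wlenAux
variable {Γ : Type*} [Group Γ] (T : Finset Γ)

lemma wlen_set_nonempty (hsym : ∀ t ∈ T, t⁻¹ ∈ T)
    (hgen : Subgroup.closure (T : Set Γ) = ⊤) (g : Γ) :
    {n : ℕ | ∃ l : List Γ, (∀ t ∈ l, t ∈ T) ∧ l.prod = g ∧ l.length = n}.Nonempty := by
  have hg : g ∈ (Subgroup.closure (T : Set Γ)).toSubmonoid := by
    rw [hgen]; trivial
  rw [Subgroup.closure_toSubmonoid] at hg
  obtain ⟨l, hl, hprod⟩ := Submonoid.exists_list_of_mem_closure hg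
  refine ⟨l.length, l, ?_, hprod, rfl⟩
  intro t ht
  rcases hl t ht with h | h
  · exact h
  · have := hsym t⁻¹ (by simpa using h)
    simpa using this

lemma wlen_spec (hsym : ∀ t ∈ T, t⁻¹ ∈ T)
    (hgen : Subgroup.closure (T : Set Γ) = ⊤) (g : Γ) :
    ∃ l : List Γ, (∀ t ∈ l, t ∈ T) ∧ l.prod = g ∧ l.length = wlen T g :=
  Nat.sInf_mem (wlen_set_nonempty T hsym hgen g)

lemma wlen_le {g : Γ} {l : List Γ} (hl : ∀ t ∈ l, t ∈ T) (hprod : l.prod = g) :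
    wlen T g ≤ l.length :=
  Nat.sInf_le ⟨l, hl, hprod, rfl⟩

lemma wlen_mul_le (hsym : ∀ t ∈ T, t⁻¹ ∈ T)
    (hgen : Subgroup.closure (T : Set Γ) = ⊤) (g h : Γ) :
    wlen T (g * h) ≤ wlen T g + wlen T h := by
  obtain ⟨l, hl, hp, hlen⟩ := wlen_spec T hsym hgen g
  obtain ⟨m, hm, hq, hmlen⟩ := wlen_spec T hsym hgen h
  have := wlen_le T (g := g * h) (l := l ++ m)
    (by intro t ht; rcases List.mem_append.mp ht with h' | h'
        exacts [hl t h', hm t h'])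
    (by rw [List.prod_append, hp, hq])
  simpa [hlen, hmlen] using this

lemma wlen_inv_le (hsym : ∀ t ∈ T, t⁻¹ ∈ T)
    (hgen : Subgroup.closure (T : Set Γ) = ⊤) (g : Γ) :
    wlen T g⁻¹ ≤ wlen T g := by
  obtain ⟨l, hl, hp, hlen⟩ := wlen_spec T hsym hgen g
  have := wlen_le T (g := g⁻¹) (l := (l.map (fun x => x⁻¹)).reverse)
    (by intro t ht
        simp only [List.mem_reverse, List.mem_map] at ht
        obtain ⟨a, ha, rfl⟩ := ht
        exact hsym a (hl a ha))
    (by rw [← List.prod_inv_reverse, hp])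
  simpa [hlen] using this

lemma ball_finite (hsym : ∀ t ∈ T, t⁻¹ ∈ T)
    (hgen : Subgroup.closure (T : Set Γ) = ⊤) (K : ℕ) :
    {g : Γ | wlen T g ≤ K}.Finite := by
  have h1 : {l : List {x // x ∈ T} | l.length ≤ K}.Finite := List.finite_length_le _ K
  have h2 : {g : Γ | wlen T g ≤ K} ⊆
      (fun l : List {x // x ∈ T} => (l.map Subtype.val).prod) '' {l | l.length ≤ K} := by
    intro g hg
    obtain ⟨l, hl, hp, hlen⟩ := wlen_spec T hsym hgen g
    refine ⟨l.attach.map (fun x => ⟨x.1, hl x.1 x.2⟩), ?_, ?_⟩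
    · simpa [hlen] using (hg : wlen T g ≤ K)
    · simpa [List.map_map, Function.comp] using hp
  exact (h1.image _).subset h2

end wlenAux

/-- Part of Theorem 4.4: if a box space $\bigsqcup_n \Gamma/\Gamma_n$ of a finitely
generated infinite group $\Gamma$ has $ULA$, then $\Gamma$ is amenable in the sense of
Block and Weinberger for its word metric.  The box space is modelled as a sigma type
whose metric restricts on each piece $\Gamma/\Gamma_n$ to the quotient word metric coming
from the image of the generating set $T$, with the pieces drifting apart. -/
theorem box_space_ula_implies_amenable {Γ : Type*} [Group Γ] [Infinite Γ]
    (T : Finset Γ) (hsym : ∀ t ∈ T, t⁻¹ ∈ T)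
    (hgen : Subgroup.closure (T : Set Γ) = ⊤)
    (Γs : ℕ → Subgroup Γ) (hnorm : ∀ n, (Γs n).Normal)
    (hfi : ∀ n, (Γs n).FiniteIndex) (hdec : ∀ n, Γs (n + 1) ≤ Γs n)
    (hint : (⨅ n, Γs n) = ⊥)
    [MetricSpace (Σ n, Γ ⧸ Γs n)] (hbg : BoundedGeometry (Σ n, Γ ⧸ Γs n))
    (hmetric : ∀ (n : ℕ) (g h : Γ),
      dist (⟨n, QuotientGroup.mk g⟩ : Σ n, Γ ⧸ Γs n) (⟨n, QuotientGroup.mk h⟩ : Σ n, Γ ⧸ Γs n)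
        = (sInf {k : ℕ | ∃ γ ∈ Γs n, ∃ l : List Γ,
            (∀ t ∈ l, t ∈ T) ∧ l.prod = g⁻¹ * h * γ ∧ l.length = k} : ℕ))
    (hsep : ∀ D : ℝ, ∃ N : ℕ, ∀ n, N ≤ n → ∀ m, m ≠ n →
      ∀ (x : Γ ⧸ Γs n) (y : Γ ⧸ Γs m),
        D ≤ dist (⟨n, x⟩ : Σ n, Γ ⧸ Γs n) (⟨m, y⟩ : Σ n, Γ ⧸ Γs n))
    (hULA : ULA (Σ n, Γ ⧸ Γs n)) :
    ∀ R : ℝ, 0 < R → ∀ ε : ℝ, 0 < ε → ∃ E : Set Γ, E.Finite ∧ E.Nonempty ∧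
      (({y : Γ | y ∉ E ∧ ∃ e ∈ E, (wlen T (y⁻¹ * e) : ℝ) ≤ R}).ncard : ℝ)
        < ε * (E.ncard : ℝ) := by
  intro R hR ε hε
  obtain ⟨S, hS, hULA'⟩ := hULA R hR ε hε
  obtain ⟨N, hN⟩ := hsep (R + 1)
  set K : ℕ := ⌈2 * (S + R)⌉₊ with hKdef
  -- choose n
  have hanti : Antitone Γs := antitone_nat_of_succ_le hdec
  have hBallFin : ({g : Γ | wlen T g ≤ K} \ {1}).Finite :=
    (ball_finite T hsym hgen K).diff
  have hex : ∀ g : Γ, ∃ m : ℕ, g ≠ 1 → g ∉ Γs m := by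
    intro g
    by_cases hg : g = 1
    · exact ⟨0, fun h => absurd hg h⟩
    · by_contra hc
      push_neg at hc
      have : g ∈ ⨅ n, Γs n := Subgroup.mem_iInf.mpr (fun i => (hc i).2)
      rw [hint, Subgroup.mem_bot] at this
      exact hg this
  choose mf hmf using hex
  set n : ℕ := max N (hBallFin.toFinset.sup mf) with hndef
  have hnN : N ≤ n := le_max_left _ _
  have hKtriv : ∀ γ ∈ Γs n, (wlen T γ : ℝ) ≤ 2 * (S + R) → γ = 1 := by
    intro γ hγ hw
    by_contra hγ1
    have hmem : γ ∈ hBallFin.toFinset := by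
      rw [Set.Finite.mem_toFinset]
      refine ⟨?_, hγ1⟩
      have : (wlen T γ : ℝ) ≤ (K : ℝ) := le_trans hw (Nat.le_ceil _)
      exact_mod_cast this
    have h1 : mf γ ≤ n := le_trans (Finset.le_sup hmem) (le_max_right _ _)
    exact hmf γ hγ1 (hanti h1 hγ)
  -- the piece X_n as a finite subset
  have hQfin : Finite (Γ ⧸ Γs n) := by
    have := hfi n
    infer_instance
  set F : Set (Σ n, Γ ⧸ Γs n) := {x | x.1 = n} with hFdef
  have hFfin : F.Finite := by
    have : F ⊆ Sigma.mk n '' Set.univ := by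
      rintro ⟨m, x⟩ hm
      have : m = n := hm
      subst this
      exact ⟨x, trivial, rfl⟩
    exact ((Set.finite_univ).image _).subset this
  obtain ⟨E0, hE0fin, hE0diam, hE0count⟩ := hULA' F hFfin
  -- basic distance facts on the n-th piece
  have hquot_ne : ∀ g h : Γ, {k : ℕ | ∃ γ ∈ Γs n, ∃ l : List Γ,
      (∀ t ∈ l, t ∈ T) ∧ l.prod = g⁻¹ * h * γ ∧ l.length = k}.Nonempty := by
    intro g h
    obtain ⟨l, hl, hp, hlen⟩ := wlen_spec T hsym hgen (g⁻¹ * h)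
    exact ⟨l.length, 1, one_mem _, l, hl, by rw [mul_one]; exact hp, rfl⟩
  have hdist_le : ∀ g h : Γ,
      dist (⟨n, QuotientGroup.mk g⟩ : Σ n, Γ ⧸ Γs n) (⟨n, QuotientGroup.mk h⟩ : Σ n, Γ ⧸ Γs n)
        ≤ (wlen T (g⁻¹ * h) : ℝ) := by
    intro g h
    rw [hmetric n g h]
    obtain ⟨l, hl, hp, hlen⟩ := wlen_spec T hsym hgen (g⁻¹ * h)
    have : sInf {k : ℕ | ∃ γ ∈ Γs n, ∃ l : List Γ,
        (∀ t ∈ l, t ∈ T) ∧ l.prod = g⁻¹ * h * γ ∧ l.length = k} ≤ wlen T (g⁻¹ * h) :=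
      Nat.sInf_le ⟨1, one_mem _, l, hl, by rw [mul_one]; exact hp, hlen⟩
    exact_mod_cast this
  have hdist_ge : ∀ g h : Γ, ∃ γ ∈ Γs n, (wlen T (g⁻¹ * h * γ) : ℝ) ≤
      dist (⟨n, QuotientGroup.mk g⟩ : Σ n, Γ ⧸ Γs n)
        (⟨n, QuotientGroup.mk h⟩ : Σ n, Γ ⧸ Γs n) := by
    intro g h
    rw [hmetric n g h]
    obtain ⟨γ, hγ, l, hl, hp, hlen⟩ := Nat.sInf_mem (hquot_ne g h)
    refine ⟨γ, hγ, ?_⟩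
    have : wlen T (g⁻¹ * h * γ) ≤ sInf {k : ℕ | ∃ γ ∈ Γs n, ∃ l : List Γ,
        (∀ t ∈ l, t ∈ T) ∧ l.prod = g⁻¹ * h * γ ∧ l.length = k} := by
      rw [← hlen]; exact wlen_le T hl hp
    exact_mod_cast this
  -- E' = E0 ∩ F, and its description as an image
  set Ebar : Set (Γ ⧸ Γs n) := {x | (⟨n, x⟩ : Σ n, Γ ⧸ Γs n) ∈ E0} with hEbardef
  have hE'eq : E0 ∩ F = Sigma.mk n '' Ebar := by
    ext ⟨m, x⟩
    constructor
    · rintro ⟨h1, h2⟩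
      have : m = n := h2
      subst this
      exact ⟨x, h1, rfl⟩
    · rintro ⟨y, hy, h⟩
      cases h
      exact ⟨hy, rfl⟩
  have hE'ne : (E0 ∩ F).Nonempty := by
    by_contra hc
    rw [Set.not_nonempty_iff_eq_empty] at hc
    rw [hc] at hE0count
    simp at hE0count
    have : (0:ℝ) ≤ ((bdry R E0 ∩ F).ncard : ℝ) := Nat.cast_nonneg _
    linarith
  -- pick base point
  obtain ⟨x₀s, hx₀E, hx₀F⟩ := hE'ne
  obtain ⟨x₀, hx₀⟩ : ∃ x : Γ ⧸ Γs n, (⟨n, x⟩ : Σ n, Γ ⧸ Γs n) = x₀s := by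
    obtain ⟨m, x⟩ := x₀s
    have : m = n := hx₀F
    subst this
    exact ⟨x, rfl⟩
  have hx₀Ebar : x₀ ∈ Ebar := by rw [hEbardef]; simp only [Set.mem_setOf_eq]; rw [hx₀]; exact hx₀E
  obtain ⟨g₀, hg₀⟩ := QuotientGroup.mk_surjective x₀
  -- distances within E0 are at most S
  have hdiam : ∀ x ∈ Ebar, dist (⟨n, x₀⟩ : Σ n, Γ ⧸ Γs n) (⟨n, x⟩ : Σ n, Γ ⧸ Γs n) ≤ S := by
    intro x hx
    have h1 : edist (⟨n, x₀⟩ : Σ n, Γ ⧸ Γs n) (⟨n, x⟩ : Σ n, Γ ⧸ Γs n) ≤ EMetric.diam E0 :=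
      EMetric.edist_le_diam_of_mem hx₀Ebar hx
    have h2 := le_trans h1 hE0diam
    rw [edist_dist] at h2
    exact (ENNReal.ofReal_le_ofReal_iff (le_of_lt hS)).mp h2
  -- section
  have hsec0 : ∀ x : Γ ⧸ Γs n, ∃ g : Γ, x ∈ Ebar →
      QuotientGroup.mk g = x ∧ (wlen T (g₀⁻¹ * g) : ℝ) ≤ S := by
    intro x
    by_cases hx : x ∈ Ebar
    · obtain ⟨h, hh⟩ := QuotientGroup.mk_surjective x
      obtain ⟨γ, hγ, hwγ⟩ := hdist_ge g₀ h
      refine ⟨h * γ, fun _ => ⟨?_, ?_⟩⟩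
      · rw [QuotientGroup.mk_mul_of_mem h hγ, hh]
      · rw [← mul_assoc]
        refine le_trans hwγ ?_
        rw [hg₀, hh]
        exact hdiam x hx
    · exact ⟨1, fun h => absurd h hx⟩
  choose sec hsec using hsec0
  set E : Set Γ := sec '' Ebar with hEdef
  have hsecmk : ∀ x ∈ Ebar, QuotientGroup.mk (sec x) = x := fun x hx => (hsec x hx).1
  have hsecw : ∀ x ∈ Ebar, (wlen T (g₀⁻¹ * sec x) : ℝ) ≤ S := fun x hx => (hsec x hx).2
  have hsecInj : Set.InjOn sec Ebar := by
    intro x hx y hy hxy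
    rw [← hsecmk x hx, ← hsecmk y hy, hxy]
  -- finiteness of Ebar
  have hEbarFin : Ebar.Finite := Set.toFinite _
  have hEfin : E.Finite := hEbarFin.image _
  have hEne : E.Nonempty := ⟨sec x₀, x₀, hx₀Ebar, rfl⟩
  -- injectivity on (S+R)-balls
  have hinj : ∀ y y' : Γ, (wlen T (g₀⁻¹ * y) : ℝ) ≤ S + R →
      (wlen T (g₀⁻¹ * y') : ℝ) ≤ S + R →
      (QuotientGroup.mk y : Γ ⧸ Γs n) = QuotientGroup.mk y' → y = y' := by
    intro y y' hy hy' hq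
    have hγ : y⁻¹ * y' ∈ Γs n := QuotientGroup.eq.mp hq
    have h1 : wlen T (y⁻¹ * y') ≤ wlen T (y⁻¹ * g₀) + wlen T (g₀⁻¹ * y') := by
      have := wlen_mul_le T hsym hgen (y⁻¹ * g₀) (g₀⁻¹ * y')
      simpa [mul_assoc] using this
    have h2 : wlen T (y⁻¹ * g₀) ≤ wlen T (g₀⁻¹ * y) := by
      have := wlen_inv_le T hsym hgen (g₀⁻¹ * y)
      simpa [mul_inv_rev] using this
    have h3 : (wlen T (y⁻¹ * y') : ℝ) ≤ 2 * (S + R) := by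
      have c1 : (wlen T (y⁻¹ * y') : ℝ) ≤ (wlen T (y⁻¹ * g₀) : ℝ) + (wlen T (g₀⁻¹ * y') : ℝ) := by
        exact_mod_cast h1
      have c2 : (wlen T (y⁻¹ * g₀) : ℝ) ≤ (wlen T (g₀⁻¹ * y) : ℝ) := by exact_mod_cast h2
      linarith
    have := hKtriv (y⁻¹ * y') hγ h3
    have : y' = y * 1 := by rw [← this]; group
    simp at this
    exact this.symm
  -- boundary subset properties
  have hbdrysub : bdry R (E0 ∩ F) ∩ F ⊆ bdry R E0 ∩ F := by
    rintro y ⟨⟨⟨e, he, hd⟩, hyne⟩, hyF⟩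
    refine ⟨⟨⟨e, he.1, hd⟩, ?_⟩, hyF⟩
    intro hyE0
    exact hyne ⟨hyE0, hyF⟩
  have hbdryF : bdry R (E0 ∩ F) ⊆ F := by
    rintro ⟨m, ym⟩ ⟨⟨e, he, hd⟩, _⟩
    obtain ⟨x, hx, rfl⟩ := hE'eq ▸ he
    by_contra hm
    have hm' : m ≠ n := hm
    have := hN n hnN m hm' x ym
    rw [dist_comm] at hd
    linarith
  -- the bad set in Γ
  set Bad : Set Γ := {y : Γ | y ∉ E ∧ ∃ e ∈ E, (wlen T (y⁻¹ * e) : ℝ) ≤ R} with hBaddef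
  -- every bad point is in the (S+R)-ball
  have hBadBall : ∀ y ∈ Bad, (wlen T (g₀⁻¹ * y) : ℝ) ≤ S + R := by
    rintro y ⟨hyE, e, heE, hwe⟩
    obtain ⟨x, hx, rfl⟩ := heE
    have h1 : wlen T (g₀⁻¹ * y) ≤ wlen T (g₀⁻¹ * sec x) + wlen T ((sec x)⁻¹ * y) := by
      have := wlen_mul_le T hsym hgen (g₀⁻¹ * sec x) ((sec x)⁻¹ * y)
      simpa [mul_assoc] using this
    have h2 : wlen T ((sec x)⁻¹ * y) ≤ wlen T (y⁻¹ * sec x) := by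
      have := wlen_inv_le T hsym hgen (y⁻¹ * sec x)
      simpa [mul_inv_rev] using this
    have c1 : (wlen T (g₀⁻¹ * y) : ℝ) ≤ (wlen T (g₀⁻¹ * sec x) : ℝ) + (wlen T ((sec x)⁻¹ * y) : ℝ) := by
      exact_mod_cast h1
    have c2 : (wlen T ((sec x)⁻¹ * y) : ℝ) ≤ (wlen T (y⁻¹ * sec x) : ℝ) := by exact_mod_cast h2
    have := hsecw x hx
    linarith
  -- the comparison map
  set f : Γ → (Σ n, Γ ⧸ Γs n) := fun y => ⟨n, QuotientGroup.mk y⟩ with hfdef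
  have hfmaps : ∀ y ∈ Bad, f y ∈ bdry R (E0 ∩ F) := by
    intro y hy
    obtain ⟨hyE, e, heE, hwe⟩ := hy
    obtain ⟨x, hx, rfl⟩ := heE
    constructor
    · refine ⟨⟨n, x⟩, ?_, ?_⟩
      · rw [hE'eq]; exact ⟨x, hx, rfl⟩
      · have := hdist_le y (sec x)
        rw [hsecmk x hx] at this
        exact le_trans this hwe
    · intro hyE'
      rw [hE'eq] at hyE'
      obtain ⟨x', hx', hx'eq⟩ := hyE'
      have hqx : (QuotientGroup.mk y : Γ ⧸ Γs n) = x' :=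
        @sigma_mk_injective ℕ (fun k => Γ ⧸ Γs k) n _ _ hx'eq.symm
      have hyball : (wlen T (g₀⁻¹ * y) : ℝ) ≤ S + R := by
        refine hBadBall y ⟨hyE, sec x, ⟨x, hx, rfl⟩, hwe⟩
      have hsball : (wlen T (g₀⁻¹ * sec x') : ℝ) ≤ S + R := by
        have := hsecw x' hx'
        linarith
      have : y = sec x' := by
        refine hinj y (sec x') hyball hsball ?_
        rw [hsecmk x' hx', hqx]
      exact hyE (this ▸ ⟨x', hx', rfl⟩)
  have hfinjOn : Set.InjOn f Bad := by
    intro y hy y' hy' hff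
    have : (QuotientGroup.mk y : Γ ⧸ Γs n) = QuotientGroup.mk y' :=
      @sigma_mk_injective ℕ (fun k => Γ ⧸ Γs k) n _ _ hff
    exact hinj y y' (hBadBall y hy) (hBadBall y' hy') this
  -- counting
  have hbdryFin : (bdry R (E0 ∩ F)).Finite := hFfin.subset hbdryF
  have hcount1 : Bad.ncard = (f '' Bad).ncard := (Set.ncard_image_of_injOn hfinjOn).symm
  have hcount2 : (f '' Bad).ncard ≤ (bdry R (E0 ∩ F)).ncard := by
    refine Set.ncard_le_ncard ?_ hbdryFin
    rintro z ⟨y, hy, rfl⟩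
    exact hfmaps y hy
  have hcount3 : (bdry R (E0 ∩ F)).ncard ≤ (bdry R E0 ∩ F).ncard := by
    refine Set.ncard_le_ncard ?_ (hFfin.subset (Set.inter_subset_right))
    intro z hz
    exact hbdrysub ⟨hz, hbdryF hz⟩
  have hcount4 : E.ncard = (E0 ∩ F).ncard := by
    rw [hE'eq, hEdef, Set.ncard_image_of_injOn hsecInj,
      Set.ncard_image_of_injOn (Set.injOn_of_injective sigma_mk_injective)]
  refine ⟨E, hEfin, hEne, ?_⟩
  have : (Bad.ncard : ℝ) ≤ ((bdry R E0 ∩ F).ncard : ℝ) := by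
    rw [hcount1]
    exact_mod_cast le_trans hcount2 hcount3
  rw [hcount4]
  calc (Bad.ncard : ℝ) ≤ ((bdry R E0 ∩ F).ncard : ℝ) := this
    _ < ε * ((E0 ∩ F).ncard : ℝ) := hE0count
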